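/- Let λ = (λ₁,…,λ_r) be a composition of n with r ≥ 2. The quantity ∑_{k'<k} #Row(k)·#Blue(k') (from the length formula for κ) is zero if and only if r = 2, i.e., if and only if the corresponding parabolic P ⊂ SL_n is maximal. Consequently l(κ) = 2·dim(G/P) iff P is maximal. -/

import Mathlib

open Finset

/-- for a composition λ of n with r ≥ 2 parts, the correction term
∑_{k'<k} #Row(k)·#Blue(k') = ∑_{k'<k} λ_k · min(λ_{k'}, max{λⱼ : j < k'}) vanishes iff
r = 2, i.e. iff the parabolic P is maximal; consequently l(κ) = 2·dim(G/P) iff r = 2. -/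
theorem kappa_dense_iff_maximal (n r : ℕ) (hr : 2 ≤ r) (lam : Fin r → ℕ)
    (hpos : ∀ i, 0 < lam i) (hsum : ∑ i, lam i = n) :
    ((∑ p ∈ (Finset.univ ×ˢ Finset.univ).filter (fun p : Fin r × Fin r => p.2 < p.1),
        lam p.1 * min (lam p.2)
          ((Finset.univ.filter (fun j : Fin r => j < p.2)).sup lam)) = 0 ↔ r = 2) ∧
    (((n ^ 2 - ∑ i, (lam i) ^ 2)
        + ∑ p ∈ (Finset.univ ×ˢ Finset.univ).filter (fun p : Fin r × Fin r => p.2 < p.1),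
            lam p.1 * min (lam p.2)
              ((Finset.univ.filter (fun j : Fin r => j < p.2)).sup lam))
      = n ^ 2 - ∑ i, (lam i) ^ 2 ↔ r = 2) := by
  have key : (∑ p ∈ (Finset.univ ×ˢ Finset.univ).filter (fun p : Fin r × Fin r => p.2 < p.1),
        lam p.1 * min (lam p.2)
          ((Finset.univ.filter (fun j : Fin r => j < p.2)).sup lam)) = 0 ↔ r = 2 := by
    constructor
    · intro h
      by_contra hne
      have hr3 : 3 ≤ r := by omega
      have h0 : (0 : ℕ) < r := by omega
      have h1 : (1 : ℕ) < r := by omega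
      have h2 : (2 : ℕ) < r := by omega
      set p : Fin r × Fin r := (⟨2, h2⟩, ⟨1, h1⟩)
      have hp : p ∈ (Finset.univ ×ˢ Finset.univ).filter
          (fun p : Fin r × Fin r => p.2 < p.1) := by
        simp only [Finset.mem_filter, Finset.mem_product, Finset.mem_univ, true_and]
        exact Fin.mk_lt_mk.mpr (by omega)
      have hterm : 0 < lam p.1 * min (lam p.2)
          ((Finset.univ.filter (fun j : Fin r => j < p.2)).sup lam) := by
        apply Nat.mul_pos (hpos _)
        refine lt_inf_iff.mpr ⟨hpos _, ?_⟩
        have hmem : (⟨0, h0⟩ : Fin r) ∈ Finset.univ.filter (fun j : Fin r => j < p.2) := by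
          simp [p, Fin.lt_def]
        exact lt_of_lt_of_le (hpos _) (Finset.le_sup hmem)
      have := (Finset.sum_eq_zero_iff.mp h) p hp
      omega
    · intro h
      subst h
      apply Finset.sum_eq_zero
      intro p hp
      simp only [Finset.mem_filter] at hp
      have h2 : p.2 = 0 := by omega
      have : (Finset.univ.filter (fun j : Fin 2 => j < p.2)) = ∅ := by
        ext j
        simp [h2, Fin.lt_def]
      rw [this]
      simp
  exact ⟨key, by rw [Nat.add_eq_left]; exact key⟩
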